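/- Let x = (xₙ)ₙ≥₀ be an infinite binary word and let y = Δ(x) be defined by yₙ = (xₙ + xₙ₊₁) mod 2. Suppose x contains a repetition of the form (x_i x_{i+1} ⋯ x_{i+ℓ-1})^e x_i ⋯ x_{i+t-1} for integers e ≥ 2, ℓ ≥ 1, 1 ≤ t ≤ ℓ (meaning x_{j} = x_{j+ℓ} for i ≤ j ≤ i + (e-1)ℓ + t - 1 - ℓ, i.e., the factor of x of length eℓ+t starting at position i has period ℓ). Then the factor of y of length eℓ+t-1 starting at position i has period ℓ, and the number of 1's in y_i y_{i+1} ⋯ y_{i+ℓ-1} is even. -/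

import Mathlib

open Fin.NatCast Fin.CommRing

lemma fin2_add_self (a : Fin 2) : a + a = 0 := by fin_cases a <;> decide

lemma telescope (x : ℕ → Fin 2) (i : ℕ) : ∀ n : ℕ,
    (∑ k ∈ Finset.range n, (x (i + k) + x (i + k + 1))) = x i + x (i + n) := by
  intro n
  induction n with
  | zero => simp [fin2_add_self]
  | succ n ih =>
      rw [Finset.sum_range_succ, ih]
      have : x i + x (i + n) + (x (i + n) + x (i + n + 1))
          = x i + (x (i + n) + x (i + n)) + x (i + n + 1) := by ring
      rw [this, fin2_add_self, add_zero]
      ring_nf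

/-- If the factor of `x` of length eℓ+t starting at position i has period ℓ
(e ≥ 2, ℓ ≥ 1, 1 ≤ t ≤ ℓ), then the factor of y = Δ(x) of length eℓ+t-1
starting at i has period ℓ, and the number of 1's in y_i ⋯ y_{i+ℓ-1} is even. -/
theorem delta_of_repetition (x : ℕ → Fin 2) (y : ℕ → Fin 2)
    (hy : ∀ n, y n = x n + x (n + 1))
    (e ℓ t i : ℕ) (he : 2 ≤ e) (hℓ : 1 ≤ ℓ) (ht1 : 1 ≤ t) (ht2 : t ≤ ℓ)
    (hrep : ∀ j, i ≤ j → j + ℓ + 1 ≤ i + e * ℓ + t → x j = x (j + ℓ)) :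
    (∀ j, i ≤ j → j + ℓ + 2 ≤ i + e * ℓ + t → y j = y (j + ℓ)) ∧
    Even ((Finset.range ℓ).filter (fun k => y (i + k) = 1)).card := by
  constructor
  · intro j hj hj2
    have h2 := hrep (j+1) (by omega) (by omega)
    rw [hy, hy, ← hrep j hj (by omega), show j+ℓ+1 = j+1+ℓ by omega, ← h2]
  · -- parity via sum in Fin 2
    have hx : x (i + ℓ) = x i := (hrep i le_rfl (by nlinarith)).symm
    have hsum : (∑ k ∈ Finset.range ℓ, y (i + k)) = 0 := by
      have := telescope x i ℓ
      simp only [← hy] at this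
      rw [this, hx, fin2_add_self]
    -- card mod 2
    have hcast : ((((Finset.range ℓ).filter (fun k => y (i + k) = 1)).card : ℕ) : Fin 2)
        = ∑ k ∈ Finset.range ℓ, y (i + k) := by
      rw [Finset.card_filter]
      push_cast
      refine Finset.sum_congr rfl fun k _ => ?_
      by_cases h : y (i + k) = 1
      · simp [h]
      · have : y (i + k) = 0 := by omega
        simp [h, this]
    rw [hsum] at hcast
    have hv : (((((Finset.range ℓ).filter (fun k => y (i + k) = 1)).card : ℕ) : Fin 2)).val
        = (((Finset.range ℓ).filter (fun k => y (i + k) = 1)).card) % 2 :=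
      Fin.val_natCast _ _
    rw [hcast] at hv
    simp only [Fin.val_zero] at hv
    exact Nat.even_iff.mpr hv.symm
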